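/- Let (Ω, 𝓕, ℙ) be a probability space and E a real normed vector space. Fix θ₀ ∈ E, a finite index set of tasks, and for each task j a random task vector τⱼ : Ω → E of the form τⱼ = Σ_{t=0}^{T−1} (−η · g_t^{(j)}), where η > 0 is a learning rate, T is the number of gradient steps, and the random vectors g_t^{(j)} satisfy 𝔼[‖g_t^{(j)}‖²] ≤ G² for all t and j with G > 0. Fix a task i and let Lᵢ : E → ℝ be Cᵢ-Lipschitz continuous for some Cᵢ ≥ 0. Given merging coefficients (αⱼ)ⱼ ∈ ℝ, set τ_m = Σⱼ αⱼ τⱼ and define Ψⱼⁱ = Cᵢ·|αⱼ| for j ≠ i and Ψᵢⁱ = Cᵢ·|1 − αᵢ|. Then 𝔼[|Lᵢ(θ₀ + τ_m) − Lᵢ(θ₀ + τᵢ)|] ≤ (Σⱼ Ψⱼⁱ) · G · η · T; in particular the expected loss gap of the merged model on task i is O(ηT). -/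

import Mathlib

open MeasureTheory

/-- **Theorem 1 (expected loss gap of model merging is `O(ηT)`).**
On a probability space `Ω`, fix a base parameter `θ₀` in a real normed vector space `E`
and, for each task `j` in a finite index set, a random task vector
`τ j = ∑ t, (-η) • g j t` built from `T` stochastic gradient steps with learning rate
`η > 0`, where the stochastic gradients satisfy `𝔼[‖g j t‖²] ≤ G²` (`G > 0`).
Fix a task `i` and let `L : E → ℝ` be `C`-Lipschitz (`C ≥ 0`). With merging
coefficients `α j`, merged vector `τ_m = ∑ j, α j • τ j`, and sensitivity coefficients
`Ψ j = C * |α j|` for `j ≠ i`, `Ψ i = C * |1 - α i|`, we have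
`𝔼[|L (θ₀ + τ_m) - L (θ₀ + τ i)|] ≤ (∑ j, Ψ j) * G * η * T`. -/
theorem expected_merged_loss_gap_le
    {Ω : Type*} [MeasureSpace Ω] [IsProbabilityMeasure (volume : Measure Ω)]
    {E : Type*} [NormedAddCommGroup E] [NormedSpace ℝ E]
    {ι : Type*} [Fintype ι] [DecidableEq ι]
    (θ₀ : E) (T : ℕ) (η : ℝ) (hη : 0 < η)
    (g : ι → Fin T → Ω → E) (G : ℝ) (hG : 0 < G)
    (hmeas : ∀ j t, AEStronglyMeasurable (g j t) (volume : Measure Ω))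
    (hint : ∀ j t, Integrable (fun ω => ‖g j t ω‖ ^ 2) (volume : Measure Ω))
    (hbound : ∀ j t, (∫ ω, ‖g j t ω‖ ^ 2) ≤ G ^ 2)
    (τ : ι → Ω → E) (hτ : ∀ j ω, τ j ω = ∑ t : Fin T, (-η) • g j t ω)
    (i : ι) (L : E → ℝ) (C : ℝ) (hC : 0 ≤ C)
    (hLip : ∀ Θ Θ' : E, |L Θ - L Θ'| ≤ C * ‖Θ - Θ'‖)
    (α : ι → ℝ) :
    (∫ ω, |L (θ₀ + ∑ j, α j • τ j ω) - L (θ₀ + τ i ω)|) ≤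
      (∑ j, if j = i then C * |1 - α j| else C * |α j|) * G * η * (T : ℝ) := by
  classical
  set Ψ : ι → ℝ := fun j => if j = i then C * |1 - α j| else C * |α j| with hΨ
  have hΨnn : ∀ j, 0 ≤ Ψ j := by
    intro j
    by_cases h : j = i <;> simp only [hΨ, h, if_true, if_false] <;> positivity
  -- integrability of ‖g j t‖
  have hg2 : ∀ j t, MemLp (fun ω => ‖g j t ω‖) 2 (volume : Measure Ω) := fun j t =>
    ((memLp_two_iff_integrable_sq_norm (hmeas j t)).2 (hint j t)).norm
  have hgint : ∀ j t, Integrable (fun ω => ‖g j t ω‖) (volume : Measure Ω) := fun j t =>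
    (hg2 j t).integrable one_le_two
  -- 𝔼‖g j t‖ ≤ G via Jensen (variance nonneg)
  have hgE : ∀ j t, (∫ ω, ‖g j t ω‖) ≤ G := by
    intro j t
    have hv := ProbabilityTheory.variance_nonneg (fun ω => ‖g j t ω‖) volume
    rw [ProbabilityTheory.variance_eq_sub (hg2 j t)] at hv
    simp only [Pi.pow_apply] at hv
    have hb := hbound j t
    have hnn : 0 ≤ ∫ ω, ‖g j t ω‖ := integral_nonneg fun ω => norm_nonneg _
    nlinarith
  -- pointwise bound
  have hpt : ∀ ω, |L (θ₀ + ∑ j, α j • τ j ω) - L (θ₀ + τ i ω)| ≤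
      ∑ j, Ψ j * (η * ∑ t, ‖g j t ω‖) := by
    intro ω
    have hdiff : (θ₀ + ∑ j, α j • τ j ω) - (θ₀ + τ i ω)
        = ∑ j, (α j - if j = i then 1 else 0) • τ j ω := by
      have hτi : τ i ω = ∑ j, (if j = i then (1 : ℝ) else 0) • τ j ω := by
        simp [ite_smul, Finset.sum_ite_eq']
      simp only [sub_smul, Finset.sum_sub_distrib]
      rw [← hτi]
      abel
    calc |L (θ₀ + ∑ j, α j • τ j ω) - L (θ₀ + τ i ω)|
        ≤ C * ‖(θ₀ + ∑ j, α j • τ j ω) - (θ₀ + τ i ω)‖ := hLip _ _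
      _ = C * ‖∑ j, (α j - if j = i then 1 else 0) • τ j ω‖ := by rw [hdiff]
      _ ≤ C * ∑ j, |α j - if j = i then 1 else 0| * ‖τ j ω‖ := by
          gcongr
          refine (norm_sum_le _ _).trans (le_of_eq ?_)
          exact Finset.sum_congr rfl fun j _ => by rw [norm_smul, Real.norm_eq_abs]
      _ ≤ ∑ j, Ψ j * (η * ∑ t, ‖g j t ω‖) := by
          rw [Finset.mul_sum]
          refine Finset.sum_le_sum fun j _ => ?_
          have hτn : ‖τ j ω‖ ≤ η * ∑ t, ‖g j t ω‖ := by
            rw [hτ j ω]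
            refine (norm_sum_le _ _).trans (le_of_eq ?_)
            rw [Finset.mul_sum]
            refine Finset.sum_congr rfl fun t _ => ?_
            rw [norm_smul, Real.norm_eq_abs, abs_neg, abs_of_pos hη]
          have hΨj : C * |α j - if j = i then 1 else 0| = Ψ j := by
            by_cases h : j = i <;> simp [hΨ, h, abs_sub_comm]
          calc C * (|α j - if j = i then 1 else 0| * ‖τ j ω‖)
              = (C * |α j - if j = i then 1 else 0|) * ‖τ j ω‖ := by ring
            _ ≤ Ψ j * (η * ∑ t, ‖g j t ω‖) := by
                rw [hΨj]
                exact mul_le_mul_of_nonneg_left hτn (hΨnn j)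
  -- the dominating function is integrable
  have hBint : Integrable (fun ω => ∑ j, Ψ j * (η * ∑ t, ‖g j t ω‖)) (volume : Measure Ω) := by
    refine integrable_finset_sum _ fun j _ => Integrable.const_mul ?_ _
    exact Integrable.const_mul (integrable_finset_sum _ fun t _ => hgint j t) _
  calc (∫ ω, |L (θ₀ + ∑ j, α j • τ j ω) - L (θ₀ + τ i ω)|)
      ≤ ∫ ω, ∑ j, Ψ j * (η * ∑ t, ‖g j t ω‖) :=
        integral_mono_of_nonneg (Filter.Eventually.of_forall fun ω => abs_nonneg _) hBint
          (Filter.Eventually.of_forall hpt)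
    _ = ∑ j, Ψ j * (η * ∑ t, ∫ ω, ‖g j t ω‖) := by
        rw [integral_finset_sum _ (fun j _ => by
          exact Integrable.const_mul
            (Integrable.const_mul (integrable_finset_sum _ fun t _ => hgint j t) _) _)]
        refine Finset.sum_congr rfl fun j _ => ?_
        rw [integral_const_mul, integral_const_mul,
          integral_finset_sum _ (fun t _ => hgint j t)]
    _ ≤ ∑ j, Ψ j * (η * ((T : ℝ) * G)) := by
        refine Finset.sum_le_sum fun j _ => ?_
        refine mul_le_mul_of_nonneg_left (mul_le_mul_of_nonneg_left ?_ hη.le) (hΨnn j)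
        calc (∑ t : Fin T, ∫ ω, ‖g j t ω‖) ≤ ∑ t : Fin T, G :=
              Finset.sum_le_sum fun t _ => hgE j t
          _ = (T : ℝ) * G := by simp [Finset.sum_const, mul_comm]
    _ = (∑ j, Ψ j) * G * η * (T : ℝ) := by
        rw [← Finset.sum_mul]
        ring
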